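/- The generating function F(x,y) satisfying F = 1 + x·F + x·y·F²/(1 − y·(F − 1)) has coefficient of x^n y^k equal to (1/n)·Σ_{j=0}^{n-1} binomial(n, k-j)·binomial(n, j+1)·binomial(n-1+j, n-1), for n ≥ 1. -/

import Mathlib

open MvPowerSeries

/-- The series `x` in two variables. -/
noncomputable def Xv : MvPowerSeries (Fin 2) ℚ := MvPowerSeries.X 0

/-- The series `y` in two variables. -/
noncomputable def Yv : MvPowerSeries (Fin 2) ℚ := MvPowerSeries.X 1



noncomputable def toN (f : MvPowerSeries (Fin 2) ℚ) : PowerSeries (PowerSeries ℚ) :=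
  PowerSeries.mk fun n => PowerSeries.mk fun k =>
    MvPowerSeries.coeff (Finsupp.single 0 n + Finsupp.single 1 k) f

lemma coeff_toN (f : MvPowerSeries (Fin 2) ℚ) (n k : ℕ) :
    PowerSeries.coeff k (PowerSeries.coeff n (toN f)) =
      MvPowerSeries.coeff (Finsupp.single 0 n + Finsupp.single 1 k) f := by
  simp [toN]

lemma fin2_eq (p : Fin 2 →₀ ℕ) : p = Finsupp.single 0 (p 0) + Finsupp.single 1 (p 1) := by
  ext i; fin_cases i <;> simp

lemma toN_mul (f g : MvPowerSeries (Fin 2) ℚ) : toN (f * g) = toN f * toN g := by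
  apply PowerSeries.ext; intro n
  apply PowerSeries.ext fun k => ?_
  rw [coeff_toN, PowerSeries.coeff_mul, map_sum]
  simp only [PowerSeries.coeff_mul, coeff_toN]
  rw [MvPowerSeries.coeff_mul, ← Finset.sum_product']
  refine Finset.sum_nbij' (i := fun pq => ((pq.1 0, pq.2 0), (pq.1 1, pq.2 1)))
    (j := fun z => (Finsupp.single 0 z.1.1 + Finsupp.single 1 z.2.1,
      Finsupp.single 0 z.1.2 + Finsupp.single 1 z.2.2)) ?_ ?_ ?_ ?_ ?_
  · intro pq hpq
    rw [Finset.HasAntidiagonal.mem_antidiagonal] at hpq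
    have h0 := DFunLike.congr_fun hpq 0
    have h1 := DFunLike.congr_fun hpq 1
    simp at h0 h1
    simp [Finset.mem_product, Finset.HasAntidiagonal.mem_antidiagonal, h0, h1]
  · intro z hz
    simp only [Finset.mem_product, Finset.HasAntidiagonal.mem_antidiagonal] at hz
    rw [Finset.HasAntidiagonal.mem_antidiagonal]
    ext i; fin_cases i <;> simp [hz.1, hz.2]
  · intro pq hpq
    exact Prod.ext (fin2_eq pq.1).symm (fin2_eq pq.2).symm
  · intro z hz
    simp
  · intro pq hpq
    simp only
    rw [← fin2_eq pq.1, ← fin2_eq pq.2]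

lemma sk_inj (n k n' k' : ℕ) :
    (Finsupp.single 0 n + Finsupp.single 1 k : Fin 2 →₀ ℕ) =
      Finsupp.single 0 n' + Finsupp.single 1 k' ↔ n = n' ∧ k = k' := by
  constructor
  · intro h
    have h0 := DFunLike.congr_fun h 0
    have h1 := DFunLike.congr_fun h 1
    simp at h0 h1
    exact ⟨h0, h1⟩
  · rintro ⟨rfl, rfl⟩; rfl

noncomputable def Θ : MvPowerSeries (Fin 2) ℚ →+* PowerSeries (PowerSeries ℚ) where
  toFun := toN
  map_one' := by
    apply PowerSeries.ext; intro n
    apply PowerSeries.ext fun k => ?_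
    rw [coeff_toN]
    have : ((Finsupp.single 0 n + Finsupp.single 1 k : Fin 2 →₀ ℕ) = 0) ↔ (n = 0 ∧ k = 0) := by
      rw [show (0 : Fin 2 →₀ ℕ) = Finsupp.single 0 0 + Finsupp.single 1 0 by simp,
        sk_inj]
    rw [MvPowerSeries.coeff_one]
    by_cases hn : n = 0 <;> by_cases hk : k = 0 <;>
      simp [hn, hk, this, PowerSeries.coeff_one]
  map_mul' := toN_mul
  map_zero' := by
    apply PowerSeries.ext; intro n
    apply PowerSeries.ext fun k => ?_
    simp [coeff_toN]
  map_add' := fun f g => by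
    apply PowerSeries.ext; intro n
    apply PowerSeries.ext fun k => ?_
    simp [coeff_toN]

lemma coeff_Θ (f : MvPowerSeries (Fin 2) ℚ) (n k : ℕ) :
    PowerSeries.coeff k (PowerSeries.coeff n (Θ f)) =
      MvPowerSeries.coeff (Finsupp.single 0 n + Finsupp.single 1 k) f := coeff_toN f n k

lemma Θ_X : Θ Xv = PowerSeries.X := by
  apply PowerSeries.ext; intro n
  apply PowerSeries.ext fun k => ?_
  rw [coeff_Θ]
  have : ((Finsupp.single 0 n + Finsupp.single 1 k : Fin 2 →₀ ℕ) =
      Finsupp.single (0 : Fin 2) 1) ↔ (n = 1 ∧ k = 0) := by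
    rw [show (Finsupp.single (0 : Fin 2) 1 : Fin 2 →₀ ℕ) =
      Finsupp.single 0 1 + Finsupp.single 1 0 by simp, sk_inj]
  rw [show Xv = MvPowerSeries.X 0 from rfl, MvPowerSeries.coeff_X]
  by_cases hn : n = 1 <;> by_cases hk : k = 0 <;>
    simp [hn, hk, this, PowerSeries.coeff_X, PowerSeries.coeff_one, Finsupp.single_eq_single_iff]

lemma Θ_Y : Θ Yv = PowerSeries.C PowerSeries.X := by
  apply PowerSeries.ext; intro n
  apply PowerSeries.ext fun k => ?_
  rw [coeff_Θ]
  have : ((Finsupp.single 0 n + Finsupp.single 1 k : Fin 2 →₀ ℕ) =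
      Finsupp.single (1 : Fin 2) 1) ↔ (n = 0 ∧ k = 1) := by
    rw [show (Finsupp.single (1 : Fin 2) 1 : Fin 2 →₀ ℕ) =
      Finsupp.single 0 0 + Finsupp.single 1 1 by simp, sk_inj]
  rw [show Yv = MvPowerSeries.X 1 from rfl, MvPowerSeries.coeff_X]
  by_cases hn : n = 0 <;> by_cases hk : k = 1 <;>
    simp [hn, hk, this, PowerSeries.coeff_C, PowerSeries.coeff_X, Finsupp.single_eq_single_iff]

noncomputable section
abbrev Rr : Type := PowerSeries ℚ
abbrev Ss : Type := PowerSeries Rr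

open PowerSeries

/-- evaluation of a power series at `G` (coefficientwise definition),
meaningful when `G` has zero constant term. -/
def ev (G ρ : Ss) : Ss :=
  PowerSeries.mk fun i => ∑ m ∈ Finset.range (i + 1),
    PowerSeries.coeff m ρ * PowerSeries.coeff i (G ^ m)

variable {G : Ss}

lemma coeff_G_pow_eq_zero (hG0 : PowerSeries.constantCoeff G = 0) {b m : ℕ} (h : b < m) : PowerSeries.coeff b (G ^ m) = 0 := by
  have hdvd : (PowerSeries.X : Ss) ^ m ∣ G ^ m := pow_dvd_pow_of_dvd (PowerSeries.X_dvd_iff.mpr hG0) m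
  exact (PowerSeries.X_pow_dvd_iff.mp hdvd) b h

lemma coeff_ev (ρ : Ss) (i : ℕ) : PowerSeries.coeff i (ev G ρ) =
    ∑ m ∈ Finset.range (i + 1),
      PowerSeries.coeff m ρ * PowerSeries.coeff i (G ^ m) := by
  simp [ev]

lemma ev_add (ρ σ : Ss) : ev G (ρ + σ) = ev G ρ + ev G σ := by
  apply PowerSeries.ext fun i => ?_
  simp [coeff_ev, add_mul, Finset.sum_add_distrib]

lemma ev_neg (ρ : Ss) : ev G (-ρ) = - ev G ρ := by
  apply PowerSeries.ext fun i => ?_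
  simp [coeff_ev, Finset.sum_neg_distrib]

lemma ev_C_mul (r : Rr) (ρ : Ss) : ev G (PowerSeries.C r * ρ) = PowerSeries.C r * ev G ρ := by
  apply PowerSeries.ext fun i => ?_
  simp [coeff_ev, PowerSeries.coeff_C_mul, Finset.mul_sum, mul_assoc]

lemma ev_one : ev G 1 = 1 := by
  apply PowerSeries.ext fun i => ?_
  rw [coeff_ev]
  rcases Nat.eq_zero_or_pos i with rfl | hi
  · simp
  · rw [Finset.sum_eq_single 0]
    · simp [PowerSeries.coeff_one, Nat.pos_iff_ne_zero.mp hi]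
    · intro m _ hm
      simp [PowerSeries.coeff_one, hm]
    · simp

lemma ev_X_mul (hG0 : PowerSeries.constantCoeff G = 0) (ρ : Ss) :
    ev G (PowerSeries.X * ρ) = G * ev G ρ := by
  apply PowerSeries.ext fun i => ?_
  rw [coeff_ev, PowerSeries.coeff_mul]
  have hL : ∑ m ∈ Finset.range (i + 1),
      PowerSeries.coeff m (PowerSeries.X * ρ) * PowerSeries.coeff i (G ^ m) =
      ∑ m ∈ Finset.range i,
        PowerSeries.coeff m ρ * PowerSeries.coeff i (G ^ (m + 1)) := by
    rw [Finset.sum_range_succ']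
    simp [PowerSeries.coeff_succ_X_mul, PowerSeries.coeff_zero_X_mul]
  rw [hL]
  have hR : ∀ p ∈ Finset.HasAntidiagonal.antidiagonal i,
      PowerSeries.coeff p.1 G * PowerSeries.coeff p.2 (ev G ρ) =
      ∑ m ∈ Finset.range (i + 1), PowerSeries.coeff m ρ *
        (PowerSeries.coeff p.1 G * PowerSeries.coeff p.2 (G ^ m)) := by
    intro p hp
    rw [Finset.HasAntidiagonal.mem_antidiagonal] at hp
    rw [coeff_ev, Finset.mul_sum]
    rw [Finset.sum_subset (Finset.range_subset_range.2 (by omega : p.2 + 1 ≤ i + 1))]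
    · exact Finset.sum_congr rfl fun m _ => by ring
    · intro m _ hm
      rw [coeff_G_pow_eq_zero hG0 (by simp at hm ⊢; omega)]; simp
  rw [Finset.sum_congr rfl hR, Finset.sum_comm]
  have : ∀ m ∈ Finset.range (i + 1),
      ∑ p ∈ Finset.HasAntidiagonal.antidiagonal i, PowerSeries.coeff m ρ *
        (PowerSeries.coeff p.1 G * PowerSeries.coeff p.2 (G ^ m)) =
      PowerSeries.coeff m ρ * PowerSeries.coeff i (G ^ (m + 1)) := by
    intro m _
    rw [← Finset.mul_sum, pow_succ, mul_comm (G ^ m) G, PowerSeries.coeff_mul]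
  rw [Finset.sum_congr rfl this, Finset.sum_range_succ,
    coeff_G_pow_eq_zero hG0 (by omega), mul_zero, add_zero]

lemma ev_linstep (hG0 : PowerSeries.constantCoeff G = 0) (r s : Rr) (ρ : Ss) :
    ev G ((PowerSeries.C r + PowerSeries.C s * PowerSeries.X) * ρ) = (PowerSeries.C r + PowerSeries.C s * G) * ev G ρ := by
  have h1 : (PowerSeries.C r + PowerSeries.C s * PowerSeries.X) * ρ = PowerSeries.C r * ρ + PowerSeries.C s * (PowerSeries.X * ρ) := by ring
  rw [h1, ev_add, ev_C_mul, ev_C_mul, ev_X_mul hG0]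
  ring

lemma ev_linpow (hG0 : PowerSeries.constantCoeff G = 0) (r s : Rr) (n : ℕ) (ρ : Ss) :
    ev G ((PowerSeries.C r + PowerSeries.C s * PowerSeries.X) ^ n * ρ) = (PowerSeries.C r + PowerSeries.C s * G) ^ n * ev G ρ := by
  induction n with
  | zero => simp
  | succ n ih =>
    have h1 : (PowerSeries.C r + PowerSeries.C s * PowerSeries.X) ^ (n + 1) * ρ =
        (PowerSeries.C r + PowerSeries.C s * PowerSeries.X) * ((PowerSeries.C r + PowerSeries.C s * PowerSeries.X) ^ n * ρ) := by ring
    rw [h1, ev_linstep hG0, ih]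
    ring

def ys : Ss := PowerSeries.C PowerSeries.X

def ZInv : Ss := PowerSeries.mk fun j => (PowerSeries.X : Rr) ^ j

lemma one_sub_mul_ZInv :
    (PowerSeries.C 1 + PowerSeries.C (-PowerSeries.X) * PowerSeries.X) * ZInv = 1 := by
  have h : (PowerSeries.C 1 + PowerSeries.C (-PowerSeries.X) * PowerSeries.X) * ZInv =
      ZInv - PowerSeries.C PowerSeries.X * (PowerSeries.X * ZInv) := by
    rw [map_one, map_neg]; ring
  rw [h]
  apply PowerSeries.ext fun i => ?_
  cases i with
  | zero => simp [ZInv, PowerSeries.coeff_zero_X_mul]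
  | succ i =>
    rw [map_sub, PowerSeries.coeff_C_mul, PowerSeries.coeff_succ_X_mul]
    simp [ZInv, PowerSeries.coeff_one, pow_succ, mul_comm]

lemma nat_hockey (n j : ℕ) :
    ∑ a ∈ Finset.range (j + 1), (n + a).choose a = (n + 1 + j).choose j := by
  induction j with
  | zero => simp
  | succ j ih =>
    rw [Finset.sum_range_succ, ih,
      show n + 1 + (j + 1) = (n + 1 + j) + 1 by ring, Nat.choose_succ_succ]
    congr 1
    · congr 1
      omega

lemma coeff_ZInv_pow (n j : ℕ) : PowerSeries.coeff j (ZInv ^ (n + 1)) =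
    (((n + j).choose j : ℕ) : Rr) * PowerSeries.X ^ j := by
  induction n generalizing j with
  | zero => simp [ZInv]
  | succ n ih =>
    rw [pow_succ, PowerSeries.coeff_mul]
    have : ∀ p ∈ Finset.HasAntidiagonal.antidiagonal j,
        PowerSeries.coeff p.1 (ZInv ^ (n + 1)) * PowerSeries.coeff p.2 ZInv =
        (((n + p.1).choose p.1 : ℕ) : Rr) * PowerSeries.X ^ j := by
      intro p hp
      rw [Finset.HasAntidiagonal.mem_antidiagonal] at hp
      rw [ih, show PowerSeries.coeff p.2 ZInv = PowerSeries.X ^ p.2 by simp [ZInv],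
        mul_assoc, ← pow_add, hp]
    rw [Finset.sum_congr rfl this,
      Finset.Nat.sum_antidiagonal_eq_sum_range_succ
        (fun a b => (((n + a).choose a : ℕ) : Rr) * PowerSeries.X ^ j),
      ← Finset.sum_mul, ← Nat.cast_sum, nat_hockey]

lemma coeff_one_add_X_pow {A : Type*} [CommRing A] (M p : ℕ) :
    PowerSeries.coeff (R := A) p ((1 + PowerSeries.X) ^ M) = (M.choose p : A) := by
  induction M generalizing p with
  | zero =>
    cases p <;> simp [PowerSeries.coeff_one]
  | succ M ih =>
    have h : (1 + PowerSeries.X : PowerSeries A) ^ (M + 1) =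
        (1 + PowerSeries.X) ^ M + PowerSeries.X * (1 + PowerSeries.X) ^ M := by ring
    rw [h, map_add]
    cases p with
    | zero => simp [PowerSeries.coeff_zero_X_mul, ih]
    | succ p =>
      rw [PowerSeries.coeff_succ_X_mul, ih, ih, Nat.choose_succ_succ, Nat.cast_add, add_comm]

lemma ys_def : ys = PowerSeries.C PowerSeries.X := rfl

instance : CharZero Rr :=
  ⟨fun a b h => by
    have := congrArg (PowerSeries.constantCoeff) h
    simpa using this⟩

local notation "D" => PowerSeries.derivativeFun

lemma coeff_D (f : Ss) (n : ℕ) :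
    PowerSeries.coeff n (D f) = PowerSeries.coeff (n + 1) f * (n + 1) :=
  PowerSeries.coeff_derivative f n

lemma constantCoeff_D (f : Ss) : PowerSeries.constantCoeff (D f) = PowerSeries.coeff 1 f := by
  rw [← PowerSeries.coeff_zero_eq_constantCoeff_apply, coeff_D]; simp

lemma D_mul (f g : Ss) : D (f * g) = f * D g + g * D f := by
  rw [PowerSeries.derivativeFun_mul, smul_eq_mul, smul_eq_mul]

lemma D_X : D (PowerSeries.X : Ss) = 1 := by
  apply PowerSeries.ext fun i => ?_
  cases i with
  | zero => simp [coeff_D, constantCoeff_D]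
  | succ i =>
    rw [coeff_D, PowerSeries.coeff_X, if_neg (by omega)]
    simp [PowerSeries.coeff_one]

lemma D_pow (f : Ss) (n : ℕ) : D (f ^ (n + 1)) = (n + 1) • (f ^ n * D f) := by
  induction n with
  | zero => simp
  | succ n ih =>
    rw [pow_succ, D_mul, ih, mul_smul_comm,
      show f * (f ^ n * D f) = f ^ (n + 1) * D f from by ring,
      succ_nsmul, succ_nsmul]
    module

theorem core (G : Ss) (hG0 : PowerSeries.constantCoeff G = 0)
    (hGeq : G * (1 - ys * G) = PowerSeries.X * ((1 + ys) * (1 + G))) (N k : ℕ) :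
    ((N + 1 : ℕ) : ℚ) * PowerSeries.coeff k (PowerSeries.coeff (N + 1) G) =
      ∑ j ∈ Finset.range (N + 1),
        (if j ≤ k then
          ((N + 1).choose (k - j) : ℚ) * ((N + 1).choose (j + 1) : ℚ) *
            ((N + j).choose N : ℚ) else 0) := by
  classical
  obtain ⟨U, hU⟩ : (PowerSeries.X : Ss) ∣ G := PowerSeries.X_dvd_iff.mpr hG0
  have hXne : (PowerSeries.X : Ss) ≠ 0 := PowerSeries.X_ne_zero
  have hUeq : U * (1 - ys * G) = (1 + ys) * (1 + G) := by
    apply mul_left_cancel₀ hXne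
    calc PowerSeries.X * (U * (1 - ys * G)) = G * (1 - ys * G) := by rw [hU]; ring
    _ = PowerSeries.X * ((1 + ys) * (1 + G)) := hGeq
  have hone : PowerSeries.constantCoeff (1 - ys * G) = 1 := by
    simp [ys_def, hG0]
  have hne1 : (1 - ys * G) ≠ 0 := fun h => by
    rw [h] at hone; simp at hone
  have hU0 : PowerSeries.constantCoeff U = 1 + PowerSeries.X := by
    have h := congrArg (PowerSeries.constantCoeff) hUeq
    simpa [ys_def, hG0] using h
  have hUnit : IsUnit U := by
    rw [PowerSeries.isUnit_iff_constantCoeff, hU0,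
      PowerSeries.isUnit_iff_constantCoeff]
    simp
  obtain ⟨W, hUW⟩ := hUnit.exists_right_inv
  obtain ⟨Φ, hΦ⟩ : ∃ Φ : Ss, Φ =
      (PowerSeries.C (1 + PowerSeries.X) + PowerSeries.C (1 + PowerSeries.X) * PowerSeries.X) ^ (N + 1) *
        ZInv ^ (N + 1) := ⟨_, rfl⟩
  have hΦkey : (PowerSeries.C 1 + PowerSeries.C (-PowerSeries.X) * PowerSeries.X) ^ (N + 1) * Φ =
      (PowerSeries.C (1 + PowerSeries.X) + PowerSeries.C (1 + PowerSeries.X) * PowerSeries.X) ^ (N + 1) := by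
    rw [hΦ, show (PowerSeries.C 1 + PowerSeries.C (-PowerSeries.X) * PowerSeries.X) ^ (N + 1) *
        ((PowerSeries.C (1 + PowerSeries.X) + PowerSeries.C (1 + PowerSeries.X) * PowerSeries.X) ^ (N + 1) *
          ZInv ^ (N + 1)) =
        (PowerSeries.C (1 + PowerSeries.X) + PowerSeries.C (1 + PowerSeries.X) * PowerSeries.X) ^ (N + 1) *
          ((PowerSeries.C 1 + PowerSeries.C (-PowerSeries.X) * PowerSeries.X) * ZInv) ^ (N + 1) from by
            rw [mul_pow]; ring,
      one_sub_mul_ZInv, one_pow, mul_one]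
  have hE : ev G Φ = U ^ (N + 1) := by
    have h1 := ev_linpow hG0 1 (-PowerSeries.X) (N + 1) Φ
    rw [hΦkey] at h1
    have h2 := ev_linpow hG0 (1 + PowerSeries.X) (1 + PowerSeries.X) (N + 1) 1
    rw [mul_one, ev_one, mul_one] at h2
    rw [h2] at h1
    have h3 : PowerSeries.C 1 + PowerSeries.C (-PowerSeries.X) * G = 1 - ys * G := by
      rw [map_one, map_neg, ys_def]; ring
    have h4 : PowerSeries.C (1 + PowerSeries.X) + PowerSeries.C (1 + PowerSeries.X) * G =
        (1 - ys * G) * U := by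
      rw [map_add, map_one, ← ys_def, mul_comm (1 - ys * G) U, hUeq]; ring
    rw [h3, h4, mul_pow] at h1
    exact mul_left_cancel₀ (pow_ne_zero _ hne1) h1.symm
  obtain ⟨T, hT⟩ : ∃ T : Ss, T = W ^ (N + 1) * D G := ⟨_, rfl⟩
  have hET : ev G Φ * T = D G := by
    rw [hE, hT, show U ^ (N + 1) * (W ^ (N + 1) * D G) =
      (U * W) ^ (N + 1) * D G from by rw [mul_pow]; ring, hUW, one_pow, one_mul]
  have hsum : PowerSeries.coeff N (D G) =
      ∑ m ∈ Finset.range (N + 1),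
        PowerSeries.coeff m Φ * PowerSeries.coeff N (G ^ m * T) := by
    conv_lhs => rw [← hET]
    rw [PowerSeries.coeff_mul]
    have hR : ∀ p ∈ Finset.HasAntidiagonal.antidiagonal N,
        PowerSeries.coeff p.1 (ev G Φ) * PowerSeries.coeff p.2 T =
        ∑ m ∈ Finset.range (N + 1), PowerSeries.coeff m Φ *
          (PowerSeries.coeff p.1 (G ^ m) * PowerSeries.coeff p.2 T) := by
      intro p hp
      rw [Finset.HasAntidiagonal.mem_antidiagonal] at hp
      rw [coeff_ev, Finset.sum_mul]
      rw [Finset.sum_subset (Finset.range_subset_range.2 (by omega : p.1 + 1 ≤ N + 1))]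
      · exact Finset.sum_congr rfl fun m _ => by ring
      · intro m _ hm
        rw [coeff_G_pow_eq_zero hG0 (by simp at hm ⊢; omega)]
        simp
    rw [Finset.sum_congr rfl hR, Finset.sum_comm]
    refine Finset.sum_congr rfl fun m _ => ?_
    rw [← Finset.mul_sum, ← PowerSeries.coeff_mul]
  have hG' : D G = U + PowerSeries.X * D U := by
    rw [hU, D_mul, D_X, mul_one]; ring
  have hWd : D W = -(W ^ 2 * D U) := by
    have h7 := congrArg (fun f : Ss => D f) hUW
    simp only [D_mul] at h7
    have h71 : D (1 : Ss) = 0 := PowerSeries.derivativeFun_one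
    rw [h71] at h7
    have h8 : U * D W = -(W * D U) := by linear_combination h7
    calc D W = (U * W) * D W := by rw [hUW, one_mul]
      _ = W * (U * D W) := by ring
      _ = W * (-(W * D U)) := by rw [h8]
      _ = -(W ^ 2 * D U) := by ring
  have hterm0 : ∀ m, m < N → PowerSeries.coeff N (G ^ m * T) = 0 := by
    intro m hm
    obtain ⟨e, he⟩ : ∃ e, N = m + (e + 1) := ⟨N - m - 1, by omega⟩
    have hsplit : G ^ m * T =
        PowerSeries.X ^ m * (W ^ (e + 1) * 1) + PowerSeries.X ^ (m + 1) * (W ^ (e + 2) * D U) := by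
      rw [hT, hG', hU, mul_pow, show W ^ (N + 1) = W ^ m * W ^ (e + 2) from by
        rw [← pow_add]; congr 1; omega]
      have h5 : (U * W) ^ m = 1 := by rw [hUW, one_pow]
      have h6 : W ^ (e + 2) * U = W ^ (e + 1) := by
        rw [show W ^ (e + 2) * U = W ^ (e + 1) * (U * W) from by ring, hUW, mul_one]
      calc PowerSeries.X ^ m * U ^ m * (W ^ m * W ^ (e + 2) * (U + PowerSeries.X * D U))
          = (U * W) ^ m * (PowerSeries.X ^ m * (W ^ (e + 2) * U) +
            PowerSeries.X ^ (m + 1) * (W ^ (e + 2) * D U)) := by rw [mul_pow]; ring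
        _ = _ := by rw [h5, h6, one_mul, mul_one]
    have hpow : D (W ^ (e + 1)) = -((e + 1) • (W ^ (e + 2) * D U)) := by
      rw [D_pow, hWd, ← smul_neg]
      congr 1
      ring
    rw [hsplit, map_add, PowerSeries.coeff_X_pow_mul', PowerSeries.coeff_X_pow_mul',
      if_pos (by omega : m ≤ N), if_pos (by omega : m + 1 ≤ N),
      show N - m = e + 1 from by omega, show N - (m + 1) = e from by omega, mul_one]
    have h9 := congrArg (PowerSeries.coeff e) hpow
    rw [coeff_D, map_neg, map_nsmul, nsmul_eq_mul] at h9
    have h10 : ((e + 1 : ℕ) : Rr) ≠ 0 := Nat.cast_ne_zero.mpr (Nat.succ_ne_zero e)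
    have h12 : PowerSeries.coeff (e + 1) (W ^ (e + 1)) =
        -(PowerSeries.coeff e (W ^ (e + 2) * D U)) := by
      apply mul_left_cancel₀ h10
      push_cast at h9 ⊢
      linear_combination h9
    rw [h12]
    ring
  have htermN : PowerSeries.coeff N (G ^ N * T) = 1 := by
    have hsplit : G ^ N * T = PowerSeries.X ^ N * 1 + PowerSeries.X ^ (N + 1) * (W * D U) := by
      rw [hT, hG', hU, mul_pow]
      have h5 : (U * W) ^ N = 1 := by rw [hUW, one_pow]
      calc PowerSeries.X ^ N * U ^ N * (W ^ (N + 1) * (U + PowerSeries.X * D U))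
          = (U * W) ^ N * (PowerSeries.X ^ N * (U * W) + PowerSeries.X ^ (N + 1) * (W * D U)) := by
            rw [mul_pow]; ring
        _ = _ := by rw [h5, hUW, one_mul, mul_one]
    rw [hsplit, map_add, PowerSeries.coeff_X_pow_mul', PowerSeries.coeff_X_pow_mul',
      if_pos (le_refl N), if_neg (by omega)]
    simp
  have hmain : ((N + 1 : ℕ) : Rr) * PowerSeries.coeff (N + 1) G =
      PowerSeries.coeff N Φ := by
    have h13 : PowerSeries.coeff N (D G) = PowerSeries.coeff N Φ := by
      rw [hsum, Finset.sum_eq_single N]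
      · rw [htermN, mul_one]
      · intro m hm hne
        rw [hterm0 m (by simp at hm; omega), mul_zero]
      · intro h; exact absurd (Finset.self_mem_range_succ N) h
    rw [← h13, coeff_D]
    push_cast
    ring
  -- now extract the coefficient of y^k
  have hΦN : PowerSeries.coeff N Φ =
      ∑ p ∈ Finset.HasAntidiagonal.antidiagonal N,
        (((N + 1).choose p.1 * (N + p.2).choose p.2 : ℕ) : Rr) *
          ((1 + PowerSeries.X : Rr) ^ (N + 1) * PowerSeries.X ^ p.2) := by
    rw [hΦ, PowerSeries.coeff_mul]
    refine Finset.sum_congr rfl fun p hp => ?_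
    rw [coeff_ZInv_pow,
      show PowerSeries.C (R := Rr) (1 + PowerSeries.X) + PowerSeries.C (R := Rr) (1 + PowerSeries.X) * PowerSeries.X =
        PowerSeries.C (R := Rr) (1 + PowerSeries.X) * (1 + PowerSeries.X) from by ring,
      mul_pow, ← map_pow, PowerSeries.coeff_C_mul, coeff_one_add_X_pow]
    push_cast
    ring
  have hfin := congrArg (PowerSeries.coeff k) hmain
  rw [hΦN, map_sum] at hfin
  rw [show ((N + 1 : ℕ) : Rr) = PowerSeries.C ((N + 1 : ℕ) : ℚ) from by
      rw [map_natCast], PowerSeries.coeff_C_mul] at hfin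
  have hterm : ∀ p ∈ Finset.HasAntidiagonal.antidiagonal N,
      PowerSeries.coeff k ((((N + 1).choose p.1 * (N + p.2).choose p.2 : ℕ) : Rr) *
        ((1 + PowerSeries.X : Rr) ^ (N + 1) * PowerSeries.X ^ p.2)) =
      (((N + 1).choose p.1 * (N + p.2).choose p.2 : ℕ) : ℚ) *
        (if p.2 ≤ k then (((N + 1).choose (k - p.2) : ℕ) : ℚ) else 0) := by
    intro p hp
    rw [show ((((N + 1).choose p.1 * (N + p.2).choose p.2 : ℕ)) : Rr) =
      PowerSeries.C (((N + 1).choose p.1 * (N + p.2).choose p.2 : ℕ) : ℚ) from by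
        rw [map_natCast], PowerSeries.coeff_C_mul, PowerSeries.coeff_mul_X_pow',
      coeff_one_add_X_pow]
  rw [Finset.sum_congr rfl hterm,
    Finset.Nat.sum_antidiagonal_eq_sum_range_succ
      (fun a b => (((N + 1).choose a * (N + b).choose b : ℕ) : ℚ) *
        (if b ≤ k then (((N + 1).choose (k - b) : ℕ) : ℚ) else 0)),
    ← Finset.sum_range_reflect] at hfin
  rw [hfin]
  refine Finset.sum_congr rfl fun j hj => ?_
  rw [Finset.mem_range] at hj
  rw [show N + 1 - 1 - j = N - j from by omega, show N - (N - j) = j from by omega]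
  have hc1 : (N + 1).choose (N - j) = (N + 1).choose (j + 1) := by
    rw [show N - j = (N + 1) - (j + 1) from by omega, Nat.choose_symm (by omega)]
  have hc2 : (N + j).choose j = (N + j).choose N := by
    rw [← Nat.choose_symm_add]
  rw [hc1, hc2]
  split_ifs with h
  · push_cast; ring
  · simp

/-- Any formal power series `F(x,y)` with `F(0,0) = 1` satisfying the
functional equation `F = 1 + xF + xyF²/(1 - y(F-1))` (cleared of
denominators) has coefficient of `x^n y^k`, for `n ≥ 1`, equal to
`(1/n)·∑_{j=0}^{n-1} C(n,k-j)·C(n,j+1)·C(n-1+j,n-1)` (terms with `j > k`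
vanish). -/
theorem noncrossing_gf_coeff (F : MvPowerSeries (Fin 2) ℚ)
    (hconst : MvPowerSeries.constantCoeff F = 1)
    (heq : F * (1 - Yv * (F - 1)) =
      (1 + Xv * F) * (1 - Yv * (F - 1)) + Xv * Yv * F ^ 2) :
    ∀ n k : ℕ, 1 ≤ n →
      (n : ℚ) * MvPowerSeries.coeff (Finsupp.single 0 n + Finsupp.single 1 k) F =
        ∑ j ∈ Finset.range n,
          (if j ≤ k then
            (n.choose (k - j) * n.choose (j + 1) * (n - 1 + j).choose (n - 1) : ℚ)
           else 0) := by
  intro n k hn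
  obtain ⟨N, rfl⟩ : ∃ N, n = N + 1 := ⟨n - 1, by omega⟩
  -- transport the functional equation through Θ
  have h := congrArg Θ heq
  simp only [map_mul, map_add, map_sub, map_one, map_pow, Θ_X, Θ_Y] at h
  obtain ⟨G, hGdef⟩ : ∃ G : Ss, Θ F = 1 + G := ⟨Θ F - 1, by ring⟩
  rw [hGdef] at h
  have hGeq : G * (1 - ys * G) =
      PowerSeries.X * ((1 + ys) * (1 + G)) := by
    rw [ys_def]
    linear_combination h
  -- constant coefficient of G (in x) vanishes
  have hG0 : PowerSeries.constantCoeff G = 0 := by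
    have h0 := congrArg (PowerSeries.constantCoeff) hGeq
    simp only [map_mul, map_sub, map_one, PowerSeries.constantCoeff_X, zero_mul,
      mul_zero, ys_def, PowerSeries.constantCoeff_C] at h0
    rcases mul_eq_zero.mp h0 with h1 | h1
    · exact h1
    · exfalso
      have h2 := congrArg (PowerSeries.constantCoeff) h1
      simp [PowerSeries.constantCoeff_X] at h2
  have hcore := core G hG0 hGeq N k
  have hco : MvPowerSeries.coeff (Finsupp.single 0 (N + 1) + Finsupp.single 1 k) F =
      PowerSeries.coeff k (PowerSeries.coeff (N + 1) G) := by
    rw [← coeff_Θ, hGdef, map_add, map_add, PowerSeries.coeff_one, if_neg (by omega)]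
    simp
  rw [hco, hcore]
  refine Finset.sum_congr rfl fun j hj => ?_
  simp only [Nat.add_sub_cancel]
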